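/- arXiv:2305.18388 — 3 statements merged into one kernel-verified Lean document; each statement's English description precedes it below -/
import Mathlib

section
/- For a random variable Z with CDF F and finite mean, the positive part of the mean equals the integral of the quantile function over the upper tail: E[Z · 1{Z > 0}] = ∫_{F(0)}^{1} F⁻¹(τ) dτ. -/
open MeasureTheory

/-- Generalized inverse CDF: `F⁻¹(τ) = inf {z : F(z) ≥ τ}`. -/
noncomputable def quantile (μ : Measure ℝ) (τ : ℝ) : ℝ :=
  sInf {z : ℝ | τ ≤ ProbabilityTheory.cdf μ z}

lemma cdf_set_nonempty (μ : Measure ℝ) {τ : ℝ} (h1 : τ < 1) :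
    {z : ℝ | τ ≤ ProbabilityTheory.cdf μ z}.Nonempty := by
  obtain ⟨z, hz⟩ := ((ProbabilityTheory.tendsto_cdf_atTop μ).eventually (lt_mem_nhds h1)).exists
  exact ⟨z, hz.le⟩

lemma cdf_set_bddBelow (μ : Measure ℝ) {τ : ℝ} (h0 : 0 < τ) :
    BddBelow {z : ℝ | τ ≤ ProbabilityTheory.cdf μ z} := by
  obtain ⟨z₀, hz₀⟩ := ((ProbabilityTheory.tendsto_cdf_atBot μ).eventually (gt_mem_nhds h0)).exists
  refine ⟨z₀, fun y hy => le_of_not_gt fun hlt => ?_⟩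
  exact absurd (hy.trans (ProbabilityTheory.monotone_cdf μ hlt.le)) (not_le.2 hz₀)

lemma quantile_le_iff (μ : Measure ℝ) {τ t : ℝ} (h0 : 0 < τ) (h1 : τ < 1) :
    quantile μ τ ≤ t ↔ τ ≤ ProbabilityTheory.cdf μ t := by
  have hne := cdf_set_nonempty μ h1
  have hbdd := cdf_set_bddBelow μ h0
  constructor
  · intro hle
    have key : τ ≤ ProbabilityTheory.cdf μ (quantile μ τ) := by
      have ht : Filter.Tendsto (ProbabilityTheory.cdf μ) (nhdsWithin (quantile μ τ)
          (Set.Ioi (quantile μ τ))) (nhds (ProbabilityTheory.cdf μ (quantile μ τ))) :=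
        ((ProbabilityTheory.cdf μ).right_continuous _).mono_left
          (nhdsWithin_mono _ Set.Ioi_subset_Ici_self)
      refine ge_of_tendsto ht ?_
      filter_upwards [self_mem_nhdsWithin] with x hx
      obtain ⟨z, hz, hzx⟩ := (csInf_lt_iff hbdd hne).1 hx
      exact hz.trans (ProbabilityTheory.monotone_cdf μ hzx.le)
    exact key.trans (ProbabilityTheory.monotone_cdf μ hle)
  · intro h
    exact csInf_le hbdd h

/-- For a distribution `μ` with CDF `F` and finite mean, the positive part of the mean equals
the integral of the quantile function over the upper tail:
`E[Z 1{Z > 0}] = ∫_{F(0)}^1 F⁻¹(τ) dτ`. -/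
theorem positive_part_mean_eq_quantile_integral (μ : Measure ℝ) [IsProbabilityMeasure μ]
    (hint : Integrable (fun z : ℝ => z) μ) :
    ∫ z in Set.Ioi (0 : ℝ), z ∂μ
      = ∫ τ in Set.Ioo (ProbabilityTheory.cdf μ 0) 1, quantile μ τ := by
  set F : ℝ → ℝ := fun t => ProbabilityTheory.cdf μ t with hFdef
  have hF0 : (0 : ℝ) ≤ F 0 := ProbabilityTheory.cdf_nonneg μ 0
  have hτpos : ∀ τ ∈ Set.Ioo (F 0) 1, 0 < τ := fun τ hτ => lt_of_le_of_lt hF0 hτ.1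
  have hqpos : ∀ τ ∈ Set.Ioo (F 0) 1, 0 < quantile μ τ := by
    intro τ hτ
    by_contra h
    exact absurd ((quantile_le_iff μ (hτpos τ hτ) hτ.2).1 (not_lt.1 h)) (not_le.2 hτ.1)
  have hmono : MonotoneOn (quantile μ) (Set.Ioo (F 0) 1) := by
    intro a ha b hb hab
    exact csInf_le_csInf (cdf_set_bddBelow μ (hτpos a ha)) (cdf_set_nonempty μ hb.2)
      fun z hz => hab.trans hz
  -- key set identity
  have hset : ∀ t : ℝ, 0 < t →
      {τ : ℝ | t < quantile μ τ} ∩ Set.Ioo (F 0) 1 = Set.Ioo (F t) 1 := by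
    intro t ht
    ext τ
    simp only [Set.mem_inter_iff, Set.mem_setOf_eq, Set.mem_Ioo]
    constructor
    · rintro ⟨hq, h1, h2⟩
      refine ⟨?_, h2⟩
      by_contra hle
      exact absurd ((quantile_le_iff μ (hτpos τ ⟨h1, h2⟩) h2).2 (not_lt.1 hle)) (not_le.2 hq)
    · rintro ⟨h1, h2⟩
      have h0τ : 0 < τ := lt_of_le_of_lt (ProbabilityTheory.cdf_nonneg μ t) h1
      have hF0t : F 0 ≤ F t := ProbabilityTheory.monotone_cdf μ ht.le
      refine ⟨?_, lt_of_le_of_lt hF0t h1, h2⟩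
      by_contra h
      exact absurd ((quantile_le_iff μ h0τ h2).1 (not_lt.1 h)) (not_le.2 h1)
  -- measurability / nonnegativity facts for the RHS
  have q_mble : AEMeasurable (quantile μ) (volume.restrict (Set.Ioo (F 0) 1)) :=
    aemeasurable_restrict_of_monotoneOn measurableSet_Ioo hmono
  have q_nn : 0 ≤ᵐ[volume.restrict (Set.Ioo (F 0) 1)] quantile μ :=
    (ae_restrict_iff' measurableSet_Ioo).2 (ae_of_all _ fun τ hτ => (hqpos τ hτ).le)
  -- nonnegativity for the LHS
  have z_nn : 0 ≤ᵐ[μ.restrict (Set.Ioi (0 : ℝ))] fun z : ℝ => z :=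
    (ae_restrict_iff' measurableSet_Ioi).2 (ae_of_all _ fun z hz => (Set.mem_Ioi.1 hz).le)
  have max_nn : 0 ≤ᵐ[μ] fun z : ℝ => max z 0 := ae_of_all _ fun z => le_max_right _ _
  have max_mble : AEMeasurable (fun z : ℝ => max z 0) μ :=
    (measurable_id.max measurable_const).aemeasurable
  -- the common value : ∫⁻ t in Ioi 0, ofReal (1 - F t)
  have key1 : ∫⁻ z in Set.Ioi (0 : ℝ), ENNReal.ofReal z ∂μ
      = ∫⁻ t in Set.Ioi (0 : ℝ), ENNReal.ofReal (1 - F t) := by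
    have e1 : ∫⁻ z in Set.Ioi (0 : ℝ), ENNReal.ofReal z ∂μ
        = ∫⁻ z, ENNReal.ofReal (max z 0) ∂μ := by
      rw [← lintegral_indicator measurableSet_Ioi]
      refine lintegral_congr fun z => ?_
      rcases le_or_gt z 0 with hz | hz
      · simp [Set.indicator, Set.mem_Ioi, not_lt.2 hz, ENNReal.ofReal_of_nonpos hz,
          max_eq_right hz]
      · simp [Set.indicator, Set.mem_Ioi, hz, max_eq_left hz.le]
    rw [e1, lintegral_eq_lintegral_meas_lt μ max_nn max_mble]
    refine setLIntegral_congr_fun measurableSet_Ioi (fun t ht => ?_)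
    have hset' : {a : ℝ | t < max a 0} = Set.Ioi t := by
      ext a
      simp [lt_max_iff, (Set.mem_Ioi.1 ht).asymm]
    rw [hset']
    have hIoi : (Set.Ioi t : Set ℝ) = (Set.Iic t)ᶜ := (Set.compl_Iic).symm
    rw [hIoi, measure_compl measurableSet_Iic (measure_ne_top μ _),
      ← ProbabilityTheory.ofReal_cdf μ t, measure_univ,
      ← ENNReal.ofReal_one, ← ENNReal.ofReal_sub _ (ProbabilityTheory.cdf_nonneg μ t)]
  have key2 : ∫⁻ τ in Set.Ioo (F 0) 1, ENNReal.ofReal (quantile μ τ)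
      = ∫⁻ t in Set.Ioi (0 : ℝ), ENNReal.ofReal (1 - F t) := by
    rw [lintegral_eq_lintegral_meas_lt (volume.restrict (Set.Ioo (F 0) 1)) q_nn q_mble]
    refine setLIntegral_congr_fun measurableSet_Ioi (fun t ht => ?_)
    rw [Measure.restrict_apply' measurableSet_Ioo, hset t (Set.mem_Ioi.1 ht),
      Real.volume_Ioo]
  -- put everything together
  rw [integral_eq_lintegral_of_nonneg_ae z_nn measurable_id.aestronglyMeasurable,
    integral_eq_lintegral_of_nonneg_ae q_nn q_mble.aestronglyMeasurable, key1, key2]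
end

section
/- Let μ be a probability measure on ℝ supported on [a,b] with quantile function F⁻¹, and let ν = (1/m) Σ_{i=1}^m δ_{F⁻¹((2i−1)/(2m))} be the discrete distribution placing mass 1/m at each of the quantiles at levels (2i−1)/(2m). Then W₁(μ, ν) ≤ (b − a)/(2m). -/
open MeasureTheory ProbabilityTheory Set Filter Topology

namespace W1aux

variable {μ : Measure ℝ} [IsProbabilityMeasure μ] {a b : ℝ}

lemma cdf_eq_one_of (hsupp : μ (Set.Icc a b) = 1) {z : ℝ} (hz : b ≤ z) : cdf μ z = 1 := by
  have h1 : μ (Set.Iic z) = 1 := le_antisymm prob_le_one (by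
    rw [← hsupp]; exact measure_mono (fun x hx => hx.2.trans hz))
  rw [cdf_eq_real, measureReal_def, h1]; simp

lemma cdf_eq_zero_of (hsupp : μ (Set.Icc a b) = 1) {z : ℝ} (hz : z < a) : cdf μ z = 0 := by
  have hc : μ (Set.Icc a b)ᶜ = 0 := by
    have := measure_compl (measurableSet_Icc (a := a) (b := b)) (measure_ne_top μ _)
    rw [hsupp, measure_univ, tsub_self] at this; exact this
  have h0 : μ (Set.Iic z) = 0 :=
    measure_mono_null (fun x hx => fun hx' => absurd (le_trans hx'.1 hx) (not_le.2 hz)) hc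
  rw [cdf_eq_real, measureReal_def, h0]; simp

lemma bddBelow_quantile_set (hsupp : μ (Set.Icc a b) = 1) {τ : ℝ} (hτ : 0 < τ) :
    BddBelow {z : ℝ | τ ≤ cdf μ z} := by
  refine ⟨a, fun z hz => ?_⟩
  by_contra hza
  have := cdf_eq_zero_of hsupp (not_le.1 hza)
  rw [Set.mem_setOf_eq, this] at hz
  exact absurd (lt_of_lt_of_le hτ hz) (lt_irrefl 0)

lemma mem_quantile_set (hsupp : μ (Set.Icc a b) = 1) {τ : ℝ} (hτ : τ ≤ 1) :
    b ∈ {z : ℝ | τ ≤ cdf μ z} := by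
  rw [Set.mem_setOf_eq, cdf_eq_one_of hsupp le_rfl]; exact hτ

lemma quantile_mem_Icc (hsupp : μ (Set.Icc a b) = 1) {τ : ℝ} (h0 : 0 < τ) (h1 : τ ≤ 1) :
    quantile μ τ ∈ Set.Icc a b := by
  constructor
  · exact le_csInf ⟨b, mem_quantile_set hsupp h1⟩ (fun z hz => by
      by_contra hza
      rw [Set.mem_setOf_eq, cdf_eq_zero_of hsupp (not_le.1 hza)] at hz
      exact absurd (lt_of_lt_of_le h0 hz) (lt_irrefl 0))
  · exact csInf_le (bddBelow_quantile_set hsupp h0) (mem_quantile_set hsupp h1)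

lemma quantile_le_iff (hsupp : μ (Set.Icc a b) = 1) {τ x : ℝ} (h0 : 0 < τ) (h1 : τ ≤ 1) :
    quantile μ τ ≤ x ↔ τ ≤ cdf μ x := by
  constructor
  · intro hqx
    have key : τ ≤ cdf μ (quantile μ τ) := by
      have hne : {z : ℝ | τ ≤ cdf μ z}.Nonempty := ⟨b, mem_quantile_set hsupp h1⟩
      have hev : ∀ᶠ z in 𝓝[>] (quantile μ τ), τ ≤ cdf μ z := by
        refine eventually_nhdsWithin_of_forall (fun z hz => ?_)
        obtain ⟨s, hs, hsz⟩ := exists_lt_of_csInf_lt hne hz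
        exact le_trans hs (monotone_cdf (μ := μ) (le_of_lt hsz))
      have hcont : Tendsto (fun z => cdf μ z) (𝓝[>] (quantile μ τ))
          (𝓝 (cdf μ (quantile μ τ))) :=
        ((cdf μ).right_continuous (quantile μ τ)).mono Set.Ioi_subset_Ici_self
      exact ge_of_tendsto hcont hev
    exact key.trans (monotone_cdf (μ := μ) hqx)
  · intro hx
    exact csInf_le (bddBelow_quantile_set hsupp h0) hx

lemma quantile_mono (hsupp : μ (Set.Icc a b) = 1) {τ τ' : ℝ} (h0 : 0 < τ) (h1 : τ' ≤ 1)
    (h : τ ≤ τ') : quantile μ τ ≤ quantile μ τ' := by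
  refine csInf_le_csInf (bddBelow_quantile_set hsupp h0) ⟨b, mem_quantile_set hsupp h1⟩
    (fun z hz => le_trans h hz)

/-- Monotone extension of the quantile function to all of `ℝ`. -/
noncomputable def G (μ : Measure ℝ) (a : ℝ) (τ : ℝ) : ℝ :=
  if τ ≤ 0 then a else quantile μ (min τ 1)

lemma G_eq {τ : ℝ} (h0 : 0 < τ) (h1 : τ ≤ 1) : G μ a τ = quantile μ τ := by
  rw [G, if_neg (not_le.2 h0), min_eq_left h1]

lemma G_mem (hsupp : μ (Set.Icc a b) = 1) (hab : a ≤ b) (τ : ℝ) : G μ a τ ∈ Set.Icc a b := by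
  rw [G]
  split
  · exact ⟨le_rfl, hab⟩
  · next h =>
    exact quantile_mem_Icc hsupp (lt_min (not_le.1 h) one_pos) (min_le_right _ _)

lemma G_monotone (hsupp : μ (Set.Icc a b) = 1) (hab : a ≤ b) : Monotone (G μ a) := by
  intro τ τ' h
  rw [G, G]
  split
  · split
    · exact le_rfl
    · next h2 => exact (quantile_mem_Icc hsupp (lt_min (not_le.1 h2) one_pos)
        (min_le_right _ _)).1
  · next h1 =>
    rw [if_neg (by push_neg; exact lt_of_lt_of_le (not_le.1 h1) h)]
    exact quantile_mono hsupp (lt_min (not_le.1 h1) one_pos) (min_le_right _ _)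
      (min_le_min h le_rfl)


lemma G_measurable (hsupp : μ (Set.Icc a b) = 1) (hab : a ≤ b) : Measurable (G μ a) :=
  (G_monotone hsupp hab).measurable

lemma map_G (hsupp : μ (Set.Icc a b) = 1) (hab : a ≤ b) :
    Measure.map (G μ a) (volume.restrict (Set.Ioc (0:ℝ) 1)) = μ := by
  have hfin : IsFiniteMeasure (volume.restrict (Set.Ioc (0:ℝ) 1)) := by
    constructor
    rw [Measure.restrict_apply_univ, Real.volume_Ioc]
    simp
  have hfin2 : IsFiniteMeasure (Measure.map (G μ a) (volume.restrict (Set.Ioc (0:ℝ) 1))) := by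
    constructor
    rw [Measure.map_apply (G_measurable hsupp hab) MeasurableSet.univ, Set.preimage_univ]
    exact hfin.measure_univ_lt_top
  refine Measure.ext_of_Iic _ _ (fun x => ?_)
  rw [Measure.map_apply (G_measurable hsupp hab) measurableSet_Iic,
    Measure.restrict_apply ((G_measurable hsupp hab) measurableSet_Iic)]
  have hset : G μ a ⁻¹' Set.Iic x ∩ Set.Ioc 0 1 = Set.Ioc 0 (min (cdf μ x) 1) := by
    ext τ
    simp only [Set.mem_inter_iff, Set.mem_preimage, Set.mem_Ioc, Set.mem_Iic, le_min_iff]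
    constructor
    · rintro ⟨hx, h0, h1⟩
      rw [G_eq h0 h1] at hx
      exact ⟨h0, (quantile_le_iff hsupp h0 h1).1 hx, h1⟩
    · rintro ⟨h0, hcx, h1⟩
      exact ⟨by rw [G_eq h0 h1]; exact (quantile_le_iff hsupp h0 h1).2 hcx, h0, h1⟩
  rw [hset, Real.volume_Ioc, tsub_zero, min_eq_left (cdf_le_one μ x), ofReal_cdf]

lemma sum_restrict (f : ℕ → ℝ) (hf : Monotone f) (n : ℕ) :
    ∑ i ∈ Finset.range n, (volume : Measure ℝ).restrict (Set.Ioc (f i) (f (i + 1))) =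
      volume.restrict (Set.Ioc (f 0) (f n)) := by
  induction n with
  | zero => simp
  | succ n ih =>
    rw [Finset.sum_range_succ, ih, ← Measure.restrict_union
      (Set.Ioc_disjoint_Ioc_of_le le_rfl) measurableSet_Ioc,
      Set.Ioc_union_Ioc_eq_Ioc (hf (Nat.zero_le n)) (hf (Nat.le_succ n))]

end W1aux

namespace W1aux

lemma map_finset_sum {α β : Type*} [MeasurableSpace α] [MeasurableSpace β] {ι : Type*}
    (s : Finset ι) (μ : ι → Measure α) {f : α → β} (hf : Measurable f) :
    (∑ i ∈ s, μ i).map f = ∑ i ∈ s, (μ i).map f := by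
  classical
  induction s using Finset.induction_on with
  | empty => simp
  | insert _ _ hns ih =>
    rw [Finset.sum_insert hns, Finset.sum_insert hns, Measure.map_add _ _ hf, ih]

end W1aux

/-- Wasserstein-1 distance on ℝ, defined as the infimum over couplings of the expected
absolute difference. -/
noncomputable def W1 (μ ν : Measure ℝ) : ℝ :=
  sInf {c : ℝ | ∃ γ : Measure (ℝ × ℝ), IsProbabilityMeasure γ ∧
    γ.map Prod.fst = μ ∧ γ.map Prod.snd = ν ∧ c = ∫ p : ℝ × ℝ, |p.1 - p.2| ∂γ}

/-- For `μ` supported on `[a,b]`, the discrete distribution `ν` placing mass `1/m` at each of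
the quantiles at levels `(2i−1)/(2m)` satisfies `W₁(μ, ν) ≤ (b − a)/(2m)`. -/
theorem W1_quantile_projection_bound (μ : Measure ℝ) [IsProbabilityMeasure μ]
    (a b : ℝ) (hab : a ≤ b) (hsupp : μ (Set.Icc a b) = 1)
    (m : ℕ) (hm : 1 ≤ m)
    (ν : Measure ℝ)
    (hν : ν = (m : ENNReal)⁻¹ •
      ∑ i ∈ Finset.range m, Measure.dirac (quantile μ ((2 * (i : ℝ) + 1) / (2 * m)))) :
    W1 μ ν ≤ (b - a) / (2 * m) := by
  classical
  have hmR : (0:ℝ) < m := by exact_mod_cast Nat.lt_of_lt_of_le Nat.zero_lt_one hm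
  set h : ℝ := 1 / (2 * (m:ℝ)) with hh_def
  have hh : 0 < h := by positivity
  set G' : ℝ → ℝ := W1aux.G μ a with hG'
  have hGmono : Monotone G' := W1aux.G_monotone hsupp hab
  have hGmeas : Measurable G' := W1aux.G_measurable hsupp hab
  have hGmem : ∀ τ, G' τ ∈ Set.Icc a b := W1aux.G_mem hsupp hab
  set c : ℕ → ℝ := fun i => (i : ℝ) / m with hc_def
  set mid : ℕ → ℝ := fun i => (2 * (i : ℝ) + 1) / (2 * (m:ℝ)) with hmid_def
  have hcmono : Monotone c := fun i j hij => by
    simp only [hc_def]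
    gcongr
  have hc0 : c 0 = 0 := by simp [hc_def]
  have hcm : c m = 1 := by simp only [hc_def]; exact div_self hmR.ne'
  have hcmid : ∀ i, c i < mid i := fun i => by
    rw [hc_def, hmid_def]
    rw [div_lt_div_iff₀ hmR (by positivity)]
    ring_nf
    nlinarith [hmR]
  have hmidc : ∀ i, mid i < c (i + 1) := fun i => by
    rw [hc_def, hmid_def]
    rw [div_lt_div_iff₀ (by positivity) hmR]
    push_cast
    nlinarith [hmR]
  have hmid_pos : ∀ i : ℕ, 0 < mid i := fun i => by
    rw [hmid_def]; positivity
  have hmid_le : ∀ i < m, mid i ≤ 1 := fun i hi => by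
    rw [hmid_def, div_le_one (by positivity)]
    have : (i : ℝ) + 1 ≤ m := by exact_mod_cast Nat.succ_le_of_lt hi
    linarith
  have hlen1 : ∀ i : ℕ, mid i - c i = h := fun i => by
    rw [hmid_def, hc_def, hh_def]; field_simp; ring
  have hlen2 : ∀ i : ℕ, c (i + 1) - mid i = h := fun i => by
    rw [hmid_def, hc_def, hh_def]; push_cast; field_simp; ring
  -- the coupling
  set ρ : ℕ → Measure ℝ := fun i => volume.restrict (Set.Ioc (c i) (c (i + 1))) with hρ_def
  set φ : ℕ → ℝ → ℝ × ℝ := fun i τ => (G' τ, G' (mid i)) with hφ_def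
  have hφm : ∀ i, Measurable (φ i) := fun i => hGmeas.prodMk measurable_const
  set γ : Measure (ℝ × ℝ) := ∑ i ∈ Finset.range m, (ρ i).map (φ i) with hγ_def
  have hρuniv : ∀ i : ℕ, ρ i Set.univ = (m : ENNReal)⁻¹ := fun i => by
    rw [hρ_def, Measure.restrict_apply_univ, Real.volume_Ioc]
    have : c (i + 1) - c i = (m:ℝ)⁻¹ := by rw [hc_def]; push_cast; field_simp; ring
    rw [this, ENNReal.ofReal_inv_of_pos hmR, ENNReal.ofReal_natCast]
  have hρfin : ∀ i, IsFiniteMeasure (ρ i) := fun i => by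
    constructor
    rw [hρuniv i]
    exact lt_of_le_of_lt (ENNReal.inv_le_one.2 (by exact_mod_cast hm)) ENNReal.one_lt_top
  haveI := hρfin
  have hsum_ρ : ∑ i ∈ Finset.range m, ρ i = volume.restrict (Set.Ioc (0:ℝ) 1) := by
    rw [hρ_def]
    rw [W1aux.sum_restrict c hcmono m, hc0, hcm]
  have hγprob : IsProbabilityMeasure γ := by
    constructor
    rw [hγ_def, Measure.finset_sum_apply]
    have : ∀ i ∈ Finset.range m, ((ρ i).map (φ i)) Set.univ = (m : ENNReal)⁻¹ := fun i _ => by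
      rw [Measure.map_apply (hφm i) MeasurableSet.univ, Set.preimage_univ, hρuniv i]
    rw [Finset.sum_congr rfl this, Finset.sum_const, Finset.card_range, nsmul_eq_mul,
      ENNReal.mul_inv_cancel (Nat.cast_ne_zero.2 (by omega)) (ENNReal.natCast_ne_top m)]
  have hfst : γ.map Prod.fst = μ := by
    rw [hγ_def, W1aux.map_finset_sum _ _ measurable_fst]
    have : ∀ i ∈ Finset.range m, ((ρ i).map (φ i)).map Prod.fst = (ρ i).map G' := fun i _ => by
      rw [Measure.map_map measurable_fst (hφm i)]
      rfl
    rw [Finset.sum_congr rfl this, ← W1aux.map_finset_sum _ _ hGmeas, hsum_ρ]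
    exact W1aux.map_G hsupp hab
  have hsnd : γ.map Prod.snd = ν := by
    rw [hγ_def, W1aux.map_finset_sum _ _ measurable_snd]
    have : ∀ i ∈ Finset.range m, ((ρ i).map (φ i)).map Prod.snd
        = (m : ENNReal)⁻¹ • Measure.dirac (quantile μ ((2 * (i : ℝ) + 1) / (2 * m))) := fun i hi => by
      rw [Measure.map_map measurable_snd (hφm i)]
      have : (Prod.snd ∘ φ i) = fun _ : ℝ => G' (mid i) := rfl
      rw [this, Measure.map_const, hρuniv i,
        hG', W1aux.G_eq (hmid_pos i) (hmid_le i (Finset.mem_range.1 hi)), hmid_def]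
    rw [Finset.sum_congr rfl this, hν, Finset.smul_sum]
    -- integrability facts
  have habs_meas : ∀ i : ℕ, Measurable (fun τ => |G' τ - G' (mid i)|) := fun i =>
    (hGmeas.sub measurable_const).abs
  have hbd : ∀ (i : ℕ) (τ : ℝ), |G' τ - G' (mid i)| ≤ b - a := fun i τ => by
    have h1 := hGmem τ; have h2 := hGmem (mid i)
    rw [abs_le]
    constructor
    · linarith [h1.1, h2.2]
    · linarith [h1.2, h2.1]
  have hintOn : ∀ (i : ℕ) (u v : ℝ),
      IntegrableOn (fun τ => |G' τ - G' (mid i)|) (Set.Ioc u v) volume := fun i u v => by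
    refine Integrable.mono' (g := fun _ => b - a) ?_ ((habs_meas i).aestronglyMeasurable)
      (ae_of_all _ fun τ => ?_)
    · exact integrableOn_const (by rw [Real.volume_Ioc]; exact ENNReal.ofReal_ne_top)
    · rw [Real.norm_eq_abs, abs_abs]; exact hbd i τ
  have hfm : ∀ (κ : Measure (ℝ × ℝ)), AEStronglyMeasurable (fun p : ℝ × ℝ => |p.1 - p.2|) κ :=
    fun κ => ((continuous_fst.sub continuous_snd).abs).aestronglyMeasurable
  have hint : ∀ i ∈ Finset.range m,
      Integrable (fun p : ℝ × ℝ => |p.1 - p.2|) ((ρ i).map (φ i)) := fun i _ => by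
    rw [integrable_map_measure (hfm _) (hφm i).aemeasurable]
    exact hintOn i _ _
  have hcost : ∫ p : ℝ × ℝ, |p.1 - p.2| ∂γ
      = ∑ i ∈ Finset.range m, ∫ τ in Set.Ioc (c i) (c (i + 1)), |G' τ - G' (mid i)| := by
    rw [hγ_def, integral_finset_sum_measure hint]
    refine Finset.sum_congr rfl fun i _ => ?_
    rw [integral_map (hφm i).aemeasurable (hfm _)]
  -- per-interval bound
  set d : ℕ → ℝ := fun j => if j = 0 then a else if j = m then b else G' (c j) with hd_def
  have hd0 : d 0 = a := by simp [hd_def]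
  have hdm : d m = b := by
    rw [hd_def]
    simp only
    rw [if_neg (by omega)]
    simp
  have hbound : ∀ i < m, ∫ τ in Set.Ioc (c i) (c (i + 1)), |G' τ - G' (mid i)|
      ≤ h * (d (i + 1) - d i) := by
    intro i him
    have hdle : ∀ τ ∈ Set.Ioc (c i) (mid i), d i ≤ G' τ := fun τ hτ => by
      rcases Nat.eq_zero_or_pos i with hi0 | hip
      · subst hi0
        rw [hd0]
        exact (hGmem τ).1
      · rw [hd_def]
        simp only
        rw [if_neg (by omega), if_neg (by omega)]
        exact hGmono (le_of_lt hτ.1)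
    have hdge : ∀ τ ∈ Set.Ioc (mid i) (c (i + 1)), G' τ ≤ d (i + 1) := fun τ hτ => by
      rcases eq_or_lt_of_le (Nat.succ_le_of_lt him) with he | hlt
      · rw [hd_def]
        simp only
        rw [if_neg (by omega), if_pos he]
        exact (hGmem τ).2
      · rw [hd_def]
        simp only
        rw [if_neg (by omega), if_neg (by omega)]
        exact hGmono hτ.2
    have hsplit : Set.Ioc (c i) (c (i + 1)) = Set.Ioc (c i) (mid i) ∪ Set.Ioc (mid i) (c (i + 1)) :=
      (Set.Ioc_union_Ioc_eq_Ioc (le_of_lt (hcmid i)) (le_of_lt (hmidc i))).symm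
    rw [hsplit, setIntegral_union (Set.Ioc_disjoint_Ioc_of_le le_rfl) measurableSet_Ioc
      (hintOn i _ _) (hintOn i _ _)]
    have hvol1 : (volume (Set.Ioc (c i) (mid i))).toReal = h := by
      rw [Real.volume_Ioc, ENNReal.toReal_ofReal (by linarith [hlen1 i])]
      exact hlen1 i
    have hvol2 : (volume (Set.Ioc (mid i) (c (i + 1)))).toReal = h := by
      rw [Real.volume_Ioc, ENNReal.toReal_ofReal (by linarith [hlen2 i])]
      exact hlen2 i
    have h1 : ∫ τ in Set.Ioc (c i) (mid i), |G' τ - G' (mid i)| ≤ h * (G' (mid i) - d i) := by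
      have hp : ∀ τ ∈ Set.Ioc (c i) (mid i), |G' τ - G' (mid i)| ≤ G' (mid i) - d i := fun τ hτ => by
        rw [abs_of_nonpos (sub_nonpos.2 (hGmono hτ.2))]
        have := hdle τ hτ
        linarith
      calc ∫ τ in Set.Ioc (c i) (mid i), |G' τ - G' (mid i)|
          ≤ ∫ _ in Set.Ioc (c i) (mid i), (G' (mid i) - d i) :=
            setIntegral_mono_on (hintOn i _ _)
              (integrableOn_const (by rw [Real.volume_Ioc]; exact ENNReal.ofReal_ne_top))
              measurableSet_Ioc hp
        _ = h * (G' (mid i) - d i) := by rw [setIntegral_const, measureReal_def, hvol1, smul_eq_mul]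
    have h2 : ∫ τ in Set.Ioc (mid i) (c (i + 1)), |G' τ - G' (mid i)|
        ≤ h * (d (i + 1) - G' (mid i)) := by
      have hp : ∀ τ ∈ Set.Ioc (mid i) (c (i + 1)), |G' τ - G' (mid i)| ≤ d (i + 1) - G' (mid i) :=
        fun τ hτ => by
        rw [abs_of_nonneg (sub_nonneg.2 (hGmono (le_of_lt hτ.1)))]
        have := hdge τ hτ
        linarith
      calc ∫ τ in Set.Ioc (mid i) (c (i + 1)), |G' τ - G' (mid i)|
          ≤ ∫ _ in Set.Ioc (mid i) (c (i + 1)), (d (i + 1) - G' (mid i)) :=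
            setIntegral_mono_on (hintOn i _ _)
              (integrableOn_const (by rw [Real.volume_Ioc]; exact ENNReal.ofReal_ne_top))
              measurableSet_Ioc hp
        _ = h * (d (i + 1) - G' (mid i)) := by rw [setIntegral_const, measureReal_def, hvol2, smul_eq_mul]
    calc (∫ τ in Set.Ioc (c i) (mid i), |G' τ - G' (mid i)|)
          + ∫ τ in Set.Ioc (mid i) (c (i + 1)), |G' τ - G' (mid i)|
        ≤ h * (G' (mid i) - d i) + h * (d (i + 1) - G' (mid i)) := add_le_add h1 h2
      _ = h * (d (i + 1) - d i) := by ring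
  -- conclusion
  have hsum_le : ∑ i ∈ Finset.range m, ∫ τ in Set.Ioc (c i) (c (i + 1)), |G' τ - G' (mid i)|
      ≤ h * (b - a) := by
    calc ∑ i ∈ Finset.range m, ∫ τ in Set.Ioc (c i) (c (i + 1)), |G' τ - G' (mid i)|
        ≤ ∑ i ∈ Finset.range m, h * (d (i + 1) - d i) :=
          Finset.sum_le_sum (fun i hi => hbound i (Finset.mem_range.1 hi))
      _ = h * (b - a) := by rw [← Finset.mul_sum, Finset.sum_range_sub, hdm, hd0]
  have hW : W1 μ ν ≤ ∫ p : ℝ × ℝ, |p.1 - p.2| ∂γ := by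
    apply csInf_le
    · refine ⟨0, fun x hx => ?_⟩
      obtain ⟨γ', _, _, _, hx⟩ := hx
      rw [hx]
      exact integral_nonneg (fun p => abs_nonneg _)
    · exact ⟨γ, hγprob, hfst, hsnd, rfl⟩
  calc W1 μ ν ≤ ∫ p : ℝ × ℝ, |p.1 - p.2| ∂γ := hW
    _ = ∑ i ∈ Finset.range m, ∫ τ in Set.Ioc (c i) (c (i + 1)), |G' τ - G' (mid i)| := hcost
    _ ≤ h * (b - a) := hsum_le
    _ = (b - a) / (2 * m) := by rw [hh_def]; ring
end

section
/- Let F⁻¹ : (0,1) → ℝ be nondecreasing and integrable, with mean μ̄ = ∫₀¹ F⁻¹(τ)dτ. Suppose F⁻¹(τ) ∈ [a, b] for all τ ∈ [1/(2m), 1 − 1/(2m)]. Then |μ̄ − (1/m)Σ_{i=1}^m F⁻¹((2i−1)/(2m))| ≤ (b−a)/(2m) + ∫_{1−1/(2m)}^1 (F⁻¹(τ) − b)_+ dτ + ∫_0^{1/(2m)} (a − F⁻¹(τ))_+ dτ. -/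
open MeasureTheory

lemma iint_le {f : ℝ → ℝ} {x y C : ℝ} (hxy : x ≤ y)
    (hf : IntervalIntegrable f volume x y)
    (h : ∀ τ ∈ Set.Ioo x y, f τ ≤ C) :
    ∫ τ in x..y, f τ ≤ (y - x) * C := by
  rw [intervalIntegral.integral_of_le hxy, ← setIntegral_congr_set Ioo_ae_eq_Ioc]
  calc ∫ τ in Set.Ioo x y, f τ ≤ ∫ _ in Set.Ioo x y, C := by
        apply setIntegral_mono_on (hf.1.mono_set Set.Ioo_subset_Ioc_self)
          (integrableOn_const (by simp [Real.volume_Ioo]))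
          measurableSet_Ioo h
    _ = (y - x) * C := by
        rw [setIntegral_const, measureReal_def, Real.volume_Ioo, ENNReal.toReal_ofReal (by linarith)]
        simp [smul_eq_mul]

lemma iint_ge {f : ℝ → ℝ} {x y C : ℝ} (hxy : x ≤ y)
    (hf : IntervalIntegrable f volume x y)
    (h : ∀ τ ∈ Set.Ioo x y, C ≤ f τ) :
    (y - x) * C ≤ ∫ τ in x..y, f τ := by
  have := iint_le (f := fun τ => -f τ) (C := -C) hxy hf.neg (fun τ hτ => by simpa using h τ hτ)
  rw [intervalIntegral.integral_neg] at this
  linarith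

noncomputable def qAux (G : ℝ → ℝ) (a b : ℝ) (m : ℕ) (i : ℕ) : ℝ :=
  if i = 0 then a else if i ≤ m then G ((2 * (i : ℝ) - 1) / (2 * m)) else b

lemma quad_bound (G : ℝ → ℝ) (a b : ℝ) (hab : a ≤ b) (m : ℕ) (hm : 1 ≤ m)
    (hmono : MonotoneOn G (Set.Ioo (0 : ℝ) 1))
    (hga : ∀ τ, a ≤ G τ) (hgb : ∀ τ, G τ ≤ b)
    (hint : IntegrableOn G (Set.Icc (0 : ℝ) 1)) :
    |(∫ τ in Set.Ioo (0 : ℝ) 1, G τ) -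
        (1 / m) * ∑ i ∈ Finset.range m, G ((2 * (i : ℝ) + 1) / (2 * m))|
      ≤ (b - a) / (2 * m) := by
  have hm1 : (1 : ℝ) ≤ m := by exact_mod_cast hm
  have hm0 : (0 : ℝ) < m := by linarith
  set Q := qAux G a b m with hQ
  have hQa : ∀ i, a ≤ Q i := by
    intro i; simp only [hQ, qAux]; split_ifs
    · exact le_refl a
    · exact hga _
    · exact hab
  have hQb : ∀ i, Q i ≤ b := by
    intro i; simp only [hQ, qAux]; split_ifs
    · exact hab
    · exact hgb _
    · exact le_refl b
  have hQ0 : Q 0 = a := by simp [hQ, qAux]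
  have hQm1 : Q (m + 1) = b := by
    simp only [hQ, qAux]
    rw [if_neg (by omega), if_neg (by omega)]
  have hQmid : ∀ i, i < m → Q (i + 1) = G ((2 * (i : ℝ) + 1) / (2 * m)) := by
    intro i hi
    simp only [hQ, qAux]
    rw [if_neg (by omega), if_pos (by omega)]
    congr 1
    push_cast
    ring
  -- interval integrability
  have hii : ∀ x y : ℝ, x ∈ Set.Icc (0:ℝ) 1 → y ∈ Set.Icc (0:ℝ) 1 →
      IntervalIntegrable G volume x y := fun x y hx hy =>
    (hint.mono_set (Set.uIcc_subset_Icc hx hy)).intervalIntegrable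
  have hcmem : ∀ i : ℕ, i ≤ m → ((i : ℝ) / m) ∈ Set.Icc (0:ℝ) 1 := by
    intro i hi
    constructor
    · positivity
    · rw [div_le_one hm0]; exact_mod_cast hi
  have hpIoo : ∀ i : ℕ, i < m → ((2 * (i : ℝ) + 1) / (2 * m)) ∈ Set.Ioo (0:ℝ) 1 := by
    intro i hi
    have hi' : (i : ℝ) + 1 ≤ m := by exact_mod_cast hi
    constructor
    · positivity
    · rw [div_lt_one (by positivity)]; linarith
  have hcp : ∀ i : ℕ, ((i : ℝ) / m) ≤ (2 * (i : ℝ) + 1) / (2 * m) := by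
    intro i
    rw [div_le_div_iff₀ hm0 (by positivity)]
    nlinarith [Nat.cast_nonneg (α := ℝ) i]
  have hpc : ∀ i : ℕ, (2 * (i : ℝ) + 1) / (2 * m) ≤ ((i : ℝ) + 1) / m := by
    intro i
    rw [div_le_div_iff₀ (by positivity) hm0]
    nlinarith [Nat.cast_nonneg (α := ℝ) i]
  -- split the integral
  have hsplit : (∫ τ in Set.Ioo (0:ℝ) 1, G τ) =
      ∑ i ∈ Finset.range m,
        ((∫ τ in ((i:ℝ)/m)..((2*(i:ℝ)+1)/(2*m)), G τ)
          + ∫ τ in ((2*(i:ℝ)+1)/(2*m))..(((i:ℝ)+1)/m), G τ) := by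
    have hadj := intervalIntegral.sum_integral_adjacent_intervals
      (f := G) (μ := volume) (a := fun i : ℕ => (i:ℝ)/m) (n := m)
      (fun k hk => hii _ _ (hcmem k hk.le) (hcmem (k+1) hk))
    simp only [Nat.cast_zero, zero_div, div_self hm0.ne'] at hadj
    rw [setIntegral_congr_set Ioo_ae_eq_Ioc, ← intervalIntegral.integral_of_le zero_le_one,
      ← hadj]
    apply Finset.sum_congr rfl
    intro i hi
    rw [← intervalIntegral.integral_add_adjacent_intervals
      (hii _ _ (hcmem i (Finset.mem_range.1 hi).le)
        (Set.Ioo_subset_Icc_self (hpIoo i (Finset.mem_range.1 hi))))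
      (hii _ _ (Set.Ioo_subset_Icc_self (hpIoo i (Finset.mem_range.1 hi)))
        (hcmem (i+1) (Finset.mem_range.1 hi)))]
    push_cast
    ring_nf
  -- per-interval bounds
  have hwidth1 : ∀ i : ℕ, (2*(i:ℝ)+1)/(2*m) - (i:ℝ)/m = 1/(2*m) := by
    intro i; field_simp; ring
  have hwidth2 : ∀ i : ℕ, ((i:ℝ)+1)/m - (2*(i:ℝ)+1)/(2*m) = 1/(2*m) := by
    intro i; field_simp; ring
  have hAIoo : ∀ i : ℕ, i < m → Set.Ioo ((i:ℝ)/m) ((2*(i:ℝ)+1)/(2*m)) ⊆ Set.Ioo (0:ℝ) 1 := by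
    intro i hi τ hτ
    have := hpIoo i hi
    have hc0 : (0:ℝ) ≤ (i:ℝ)/m := by positivity
    exact ⟨lt_of_le_of_lt hc0 hτ.1, lt_trans hτ.2 this.2⟩
  have hBIoo : ∀ i : ℕ, i < m → Set.Ioo ((2*(i:ℝ)+1)/(2*m)) (((i:ℝ)+1)/m) ⊆ Set.Ioo (0:ℝ) 1 := by
    intro i hi τ hτ
    have := hpIoo i hi
    have hc1 : ((i:ℝ)+1)/m ≤ 1 := by
      rw [div_le_one hm0]; exact_mod_cast hi
    exact ⟨lt_trans this.1 hτ.1, lt_of_lt_of_le hτ.2 hc1⟩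
  have hAle : ∀ i : ℕ, i < m →
      (∫ τ in ((i:ℝ)/m)..((2*(i:ℝ)+1)/(2*m)), G τ) ≤ 1/(2*m) * Q (i+1) := by
    intro i hi
    have := iint_le (C := Q (i+1)) (hcp i)
      (hii _ _ (hcmem i hi.le) (Set.Ioo_subset_Icc_self (hpIoo i hi)))
      (fun τ hτ => by
        rw [hQmid i hi]
        exact hmono (hAIoo i hi hτ) (hpIoo i hi) hτ.2.le)
    rwa [hwidth1 i] at this
  have hAge : ∀ i : ℕ, i < m →
      1/(2*m) * Q i ≤ ∫ τ in ((i:ℝ)/m)..((2*(i:ℝ)+1)/(2*m)), G τ := by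
    intro i hi
    have := iint_ge (C := Q i) (hcp i)
      (hii _ _ (hcmem i hi.le) (Set.Ioo_subset_Icc_self (hpIoo i hi)))
      (fun τ hτ => by
        match i with
        | 0 => rw [hQ0]; exact hga τ
        | (j+1) =>
          rw [hQmid j (by omega)]
          have hpj : (2*(j:ℝ)+1)/(2*m) ≤ ((j:ℕ)+1:ℕ)/m := by
            push_cast
            exact hpc j
          apply hmono (hpIoo j (by omega)) (hAIoo _ hi hτ)
          refine le_of_lt (lt_of_le_of_lt ?_ hτ.1)
          push_cast at hpj ⊢
          linarith)
    rwa [hwidth1 i] at this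
  have hBle : ∀ i : ℕ, i < m →
      (∫ τ in ((2*(i:ℝ)+1)/(2*m))..(((i:ℝ)+1)/m), G τ) ≤ 1/(2*m) * Q (i+2) := by
    intro i hi
    have := iint_le (C := Q (i+2)) (hpc i)
      (hii _ _ (Set.Ioo_subset_Icc_self (hpIoo i hi))
        (by have := hcmem (i+1) hi; push_cast at this; exact this))
      (fun τ hτ => by
        by_cases hi2 : i + 1 < m
        · rw [show i + 2 = (i+1) + 1 from rfl, hQmid (i+1) hi2]
          apply hmono (hBIoo i hi hτ) (hpIoo (i+1) hi2)
          have : ((i:ℝ)+1)/m ≤ (2*((i:ℝ)+1)+1)/(2*m) := by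
            have := hcp (i+1); push_cast at this ⊢; linarith
          push_cast
          linarith [hτ.2]
        · have : i + 2 = m + 1 := by omega
          rw [this, hQm1]
          exact hgb τ)
    rwa [hwidth2 i] at this
  have hBge : ∀ i : ℕ, i < m →
      1/(2*m) * Q (i+1) ≤ ∫ τ in ((2*(i:ℝ)+1)/(2*m))..(((i:ℝ)+1)/m), G τ := by
    intro i hi
    have := iint_ge (C := Q (i+1)) (hpc i)
      (hii _ _ (Set.Ioo_subset_Icc_self (hpIoo i hi))
        (by have := hcmem (i+1) hi; push_cast at this; exact this))
      (fun τ hτ => by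
        rw [hQmid i hi]
        exact hmono (hpIoo i hi) (hBIoo i hi hτ) hτ.1.le)
    rwa [hwidth2 i] at this
  -- sum identities
  set S := ∑ i ∈ Finset.range m, G ((2 * (i : ℝ) + 1) / (2 * m)) with hS
  have hS1 : ∑ i ∈ Finset.range m, Q (i + 1) = S :=
    Finset.sum_congr rfl (fun i hi => hQmid i (Finset.mem_range.1 hi))
  have e1 := Finset.sum_range_succ' (fun i => Q (i + 1)) m
  have e2 := Finset.sum_range_succ (fun i => Q (i + 1)) m
  have hS2 : ∑ i ∈ Finset.range m, Q (i + 2) = S - Q 1 + Q (m + 1) := by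
    have : ∑ i ∈ Finset.range m, Q (i + 1 + 1) = ∑ i ∈ Finset.range m, Q (i + 2) := by
      apply Finset.sum_congr rfl; intro i _; norm_num
    rw [this] at e1
    rw [hS1] at e2
    linarith
  have e3 := Finset.sum_range_succ' Q m
  have e4 := Finset.sum_range_succ Q m
  have hS0 : ∑ i ∈ Finset.range m, Q i = S + Q 0 - Q m := by
    rw [hS1] at e3
    linarith
  have hpos : (0:ℝ) ≤ 1 / (2 * m) := by positivity
  have h2mS : (1:ℝ) / (2 * m) * S + 1 / (2 * m) * S = 1 / m * S := by
    rw [← add_mul, ← add_div]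
    congr 1
    rw [div_eq_div_iff (by positivity) hm0.ne']
    ring
  have hba : (b - a) / (2 * (m:ℝ)) = 1 / (2 * m) * (b - a) := by ring
  have hup : (∫ τ in Set.Ioo (0:ℝ) 1, G τ) ≤ (1 / m) * S + (b - a) / (2 * m) := by
    rw [hsplit]
    calc ∑ i ∈ Finset.range m,
          ((∫ τ in ((i:ℝ)/m)..((2*(i:ℝ)+1)/(2*m)), G τ)
            + ∫ τ in ((2*(i:ℝ)+1)/(2*m))..(((i:ℝ)+1)/m), G τ)
        ≤ ∑ i ∈ Finset.range m, (1/(2*(m:ℝ)) * Q (i+1) + 1/(2*m) * Q (i+2)) :=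
          Finset.sum_le_sum (fun i hi => add_le_add
            (hAle i (Finset.mem_range.1 hi)) (hBle i (Finset.mem_range.1 hi)))
      _ = 1/(2*(m:ℝ)) * S + 1/(2*m) * (S - Q 1 + Q (m+1)) := by
          rw [Finset.sum_add_distrib, ← Finset.mul_sum, ← Finset.mul_sum, hS1, hS2]
      _ ≤ (1 / m) * S + (b - a) / (2 * m) := by
          rw [hQm1, hba]
          linarith [h2mS, mul_nonneg hpos (sub_nonneg.2 (hQa 1))]
  have hlo : (1 / m) * S - (b - a) / (2 * m) ≤ ∫ τ in Set.Ioo (0:ℝ) 1, G τ := by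
    rw [hsplit]
    calc (1 / (m:ℝ)) * S - (b - a) / (2 * m)
        ≤ 1/(2*(m:ℝ)) * (S + Q 0 - Q m) + 1/(2*m) * S := by
          rw [hQ0, hba]
          linarith [h2mS, mul_nonneg hpos (sub_nonneg.2 (hQb m))]
      _ = ∑ i ∈ Finset.range m, (1/(2*(m:ℝ)) * Q i + 1/(2*m) * Q (i+1)) := by
          rw [Finset.sum_add_distrib, ← Finset.mul_sum, ← Finset.mul_sum, hS1, hS0]
      _ ≤ _ :=
          Finset.sum_le_sum (fun i hi => add_le_add
            (hAge i (Finset.mem_range.1 hi)) (hBge i (Finset.mem_range.1 hi)))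
  rw [abs_le]
  constructor <;> linarith

/-- Midpoint-quadrature mean bound for a nondecreasing integrable quantile function `F⁻¹` on
`(0,1)` which takes values in `[a,b]` on the central region `[1/(2m), 1 − 1/(2m)]`:
`|μ̄ − (1/m)Σ_{i=1}^m F⁻¹((2i−1)/(2m))| ≤ (b−a)/(2m) + tail excess integrals`. -/
theorem midpoint_quadrature_unbounded_bound
    (Finv : ℝ → ℝ) (hmono : MonotoneOn Finv (Set.Ioo (0 : ℝ) 1))
    (hint : IntegrableOn Finv (Set.Ioo (0 : ℝ) 1))
    (a b : ℝ) (hab : a ≤ b) (m : ℕ) (hm : 1 ≤ m)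
    (hbound : ∀ τ ∈ Set.Icc (1 / (2 * (m : ℝ))) (1 - 1 / (2 * m)), Finv τ ∈ Set.Icc a b) :
    |(∫ τ in Set.Ioo (0 : ℝ) 1, Finv τ) -
        (1 / m) * ∑ i ∈ Finset.range m, Finv ((2 * (i : ℝ) + 1) / (2 * m))|
      ≤ (b - a) / (2 * m)
        + (∫ τ in Set.Ioo (1 - 1 / (2 * (m : ℝ))) 1, max (Finv τ - b) 0)
        + ∫ τ in Set.Ioo (0 : ℝ) (1 / (2 * m)), max (a - Finv τ) 0 := by

  have hm1 : (1 : ℝ) ≤ m := by exact_mod_cast hm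
  have hm0 : (0 : ℝ) < m := by linarith
  set h : ℝ := 1 / (2 * (m : ℝ)) with hh
  have hh0 : 0 < h := by positivity
  have hh2 : h ≤ 1 / 2 := by
    rw [hh, div_le_div_iff₀ (by positivity) (by norm_num)]
    linarith
  -- the clipped function
  set G : ℝ → ℝ := fun τ => max a (min (Finv τ) b) with hG
  have hGa : ∀ τ, a ≤ G τ := fun τ => le_max_left _ _
  have hGb : ∀ τ, G τ ≤ b := fun τ => max_le hab (min_le_right _ _)
  have hGF : ∀ τ, Finv τ ≤ b → Finv τ ≤ G τ := by
    intro τ hτ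
    rw [hG]
    simp only
    rw [min_eq_left hτ]
    exact le_max_right _ _
  have hFG : ∀ τ, a ≤ Finv τ → G τ ≤ Finv τ := by
    intro τ hτ
    exact max_le hτ (min_le_left _ _)
  have hGmono : MonotoneOn G (Set.Ioo (0:ℝ) 1) := fun x hx y hy hxy =>
    max_le_max le_rfl (min_le_min (hmono hx hy hxy) le_rfl)
  have hGeq : ∀ τ ∈ Set.Icc h (1 - h), G τ = Finv τ := by
    intro τ hτ
    have := hbound τ hτ
    rw [hG]
    simp only
    rw [min_eq_left this.2, max_eq_right this.1]
  have hGint : IntegrableOn G (Set.Ioo (0:ℝ) 1) := by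
    have hconst : ∀ c : ℝ, IntegrableOn (fun _ : ℝ => c) (Set.Ioo (0:ℝ) 1) :=
      fun c => integrableOn_const (by simp [Real.volume_Ioo])
    exact Integrable.sup (hconst a) (Integrable.inf hint (hconst b))
  have hGIcc : IntegrableOn G (Set.Icc (0:ℝ) 1) :=
    hGint.congr_set_ae Ioo_ae_eq_Icc.symm
  -- the quadrature bound for G
  have hmidIcc : ∀ i : ℕ, i < m → ((2 * (i:ℝ) + 1) / (2 * m)) ∈ Set.Icc h (1 - h) := by
    intro i hi
    have hi' : (i : ℝ) + 1 ≤ m := by exact_mod_cast hi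
    have hi0 : (0:ℝ) ≤ i := Nat.cast_nonneg i
    constructor
    · rw [hh, div_le_div_iff₀ (by positivity) (by positivity)]
      nlinarith
    · rw [hh, div_le_iff₀ (by positivity)]
      have : (1 - 1 / (2 * (m:ℝ))) * (2 * m) = 2 * m - 1 := by field_simp
      rw [this]
      linarith
  have hsum : ∑ i ∈ Finset.range m, G ((2 * (i : ℝ) + 1) / (2 * m)) =
      ∑ i ∈ Finset.range m, Finv ((2 * (i : ℝ) + 1) / (2 * m)) :=
    Finset.sum_congr rfl (fun i hi => hGeq _ (hmidIcc i (Finset.mem_range.1 hi)))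
  have hkey : |(∫ τ in Set.Ioo (0 : ℝ) 1, G τ) -
      (1 / m) * ∑ i ∈ Finset.range m, Finv ((2 * (i : ℝ) + 1) / (2 * m))|
      ≤ (b - a) / (2 * m) := by
    rw [← hsum]
    exact quad_bound G a b hab m hm hGmono hGa hGb hGIcc
  -- tail bounds
  have hIccIoo : Set.Icc h (1 - h) ⊆ Set.Ioo (0:ℝ) 1 := fun x hx =>
    ⟨lt_of_lt_of_le hh0 hx.1, lt_of_le_of_lt hx.2 (by linarith)⟩
  -- Finv ≤ b on (0, 1-h]
  have hFb : ∀ τ ∈ Set.Ioc (0:ℝ) (1 - h), Finv τ ≤ b := by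
    intro τ hτ
    by_cases hτh : h ≤ τ
    · exact (hbound τ ⟨hτh, hτ.2⟩).2
    · push_neg at hτh
      have hτIoo : τ ∈ Set.Ioo (0:ℝ) 1 := ⟨hτ.1, by linarith⟩
      have hhIoo : h ∈ Set.Ioo (0:ℝ) 1 := ⟨hh0, by linarith⟩
      calc Finv τ ≤ Finv h := hmono hτIoo hhIoo hτh.le
        _ ≤ b := (hbound h ⟨le_refl h, by linarith⟩).2
  -- Finv ≥ a on [h, 1)
  have hFa : ∀ τ ∈ Set.Ico h (1:ℝ), a ≤ Finv τ := by
    intro τ hτ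
    by_cases hτh : τ ≤ 1 - h
    · exact (hbound τ ⟨hτ.1, hτh⟩).1
    · push_neg at hτh
      have hτIoo : τ ∈ Set.Ioo (0:ℝ) 1 := ⟨lt_of_lt_of_le hh0 hτ.1, hτ.2⟩
      have h1hIoo : (1 - h) ∈ Set.Ioo (0:ℝ) 1 := ⟨by linarith, by linarith⟩
      calc a ≤ Finv (1 - h) := (hbound (1 - h) ⟨by linarith, le_refl _⟩).1
        _ ≤ Finv τ := hmono h1hIoo hτIoo hτh.le
  -- subsets
  have hsub1 : Set.Ioc (0:ℝ) (1-h) ⊆ Set.Ioo (0:ℝ) 1 := fun x hx =>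
    ⟨hx.1, lt_of_le_of_lt hx.2 (by linarith)⟩
  have hsub2 : Set.Ioo (1-h) (1:ℝ) ⊆ Set.Ioo (0:ℝ) 1 := fun x hx =>
    ⟨by have := hx.1; linarith, hx.2⟩
  have hsub3 : Set.Ioo (0:ℝ) h ⊆ Set.Ioo (0:ℝ) 1 := fun x hx =>
    ⟨hx.1, by have := hx.2; linarith⟩
  have hsub4 : Set.Ico h (1:ℝ) ⊆ Set.Ioo (0:ℝ) 1 := fun x hx =>
    ⟨lt_of_lt_of_le hh0 hx.1, hx.2⟩
  have hFGint : IntegrableOn (fun τ => Finv τ - G τ) (Set.Ioo (0:ℝ) 1) := hint.sub hGint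
  have hGFint : IntegrableOn (fun τ => G τ - Finv τ) (Set.Ioo (0:ℝ) 1) := hGint.sub hint
  have hconst : ∀ (c : ℝ) (s : Set ℝ) (x y : ℝ), s ⊆ Set.Ioo x y →
      IntegrableOn (fun _ : ℝ => c) s := by
    intro c s x y hs
    refine integrableOn_const (ne_of_lt ?_)
    exact lt_of_le_of_lt (measure_mono hs) (by simp [Real.volume_Ioo, ENNReal.ofReal_lt_top])
  have hT1int : IntegrableOn (fun τ => max (Finv τ - b) 0) (Set.Ioo (1-h) (1:ℝ)) :=
    Integrable.pos_part ((hint.mono_set hsub2).sub (hconst b _ _ _ (subset_refl _)))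
  have hT2int : IntegrableOn (fun τ => max (a - Finv τ) 0) (Set.Ioo (0:ℝ) h) :=
    Integrable.pos_part ((hconst a _ _ _ (subset_refl _)).sub (hint.mono_set hsub3))
  have hT1pos : 0 ≤ ∫ τ in Set.Ioo (1-h) (1:ℝ), max (Finv τ - b) 0 :=
    setIntegral_nonneg measurableSet_Ioo (fun τ _ => le_max_right _ _)
  have hT2pos : 0 ≤ ∫ τ in Set.Ioo (0:ℝ) h, max (a - Finv τ) 0 :=
    setIntegral_nonneg measurableSet_Ioo (fun τ _ => le_max_right _ _)
  have hunion1 : Set.Ioc (0:ℝ) (1-h) ∪ Set.Ioo (1-h) 1 = Set.Ioo (0:ℝ) 1 :=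
    Set.Ioc_union_Ioo_eq_Ioo (by linarith) (by linarith)
  have hunion2 : Set.Ioo (0:ℝ) h ∪ Set.Ico h 1 = Set.Ioo (0:ℝ) 1 :=
    Set.Ioo_union_Ico_eq_Ioo hh0 (by linarith)
  have hdisj1 : Disjoint (Set.Ioc (0:ℝ) (1-h)) (Set.Ioo (1-h) 1) := by
    rw [Set.disjoint_left]
    rintro x ⟨_, hx2⟩ ⟨hx3, _⟩
    exact absurd hx3 (not_lt.2 hx2)
  have hdisj2 : Disjoint (Set.Ioo (0:ℝ) h) (Set.Ico h 1) := by
    rw [Set.disjoint_left]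
    rintro x ⟨_, hx2⟩ ⟨hx3, _⟩
    exact absurd hx3 (not_le.2 hx2)
  have hup1 : (∫ τ in Set.Ioo (0:ℝ) 1, Finv τ) - (∫ τ in Set.Ioo (0:ℝ) 1, G τ)
      ≤ ∫ τ in Set.Ioo (1-h) (1:ℝ), max (Finv τ - b) 0 := by
    rw [← integral_sub hint hGint, ← hunion1,
      setIntegral_union hdisj1 measurableSet_Ioo
        (hFGint.mono_set (hunion1 ▸ Set.subset_union_left))
        (hFGint.mono_set (hunion1 ▸ Set.subset_union_right))]
    have hp1 : (∫ τ in Set.Ioc (0:ℝ) (1-h), (Finv τ - G τ)) ≤ 0 :=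
      setIntegral_nonpos measurableSet_Ioc
        (fun τ hτ => sub_nonpos.2 (hGF τ (hFb τ hτ)))
    have hp2 : (∫ τ in Set.Ioo (1-h) (1:ℝ), (Finv τ - G τ))
        ≤ ∫ τ in Set.Ioo (1-h) (1:ℝ), max (Finv τ - b) 0 := by
      apply setIntegral_mono_on (hFGint.mono_set hsub2) hT1int measurableSet_Ioo
      intro τ _
      rcases le_total (Finv τ) b with hc | hc
      · have := hGF τ hc
        have := le_max_right (Finv τ - b) 0
        linarith
      · have h1 : b ≤ G τ := by
          have : min (Finv τ) b = b := min_eq_right hc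
          calc b = min (Finv τ) b := this.symm
            _ ≤ G τ := le_max_right _ _
        have := le_max_left (Finv τ - b) 0
        linarith
    linarith
  have hup2 : (∫ τ in Set.Ioo (0:ℝ) 1, G τ) - (∫ τ in Set.Ioo (0:ℝ) 1, Finv τ)
      ≤ ∫ τ in Set.Ioo (0:ℝ) h, max (a - Finv τ) 0 := by
    rw [← integral_sub hGint hint, ← hunion2,
      setIntegral_union hdisj2 measurableSet_Ico
        (hGFint.mono_set (hunion2 ▸ Set.subset_union_left))
        (hGFint.mono_set (hunion2 ▸ Set.subset_union_right))]
    have hp1 : (∫ τ in Set.Ico h (1:ℝ), (G τ - Finv τ)) ≤ 0 :=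
      setIntegral_nonpos measurableSet_Ico
        (fun τ hτ => sub_nonpos.2 (hFG τ (hFa τ hτ)))
    have hp2 : (∫ τ in Set.Ioo (0:ℝ) h, (G τ - Finv τ))
        ≤ ∫ τ in Set.Ioo (0:ℝ) h, max (a - Finv τ) 0 := by
      apply setIntegral_mono_on (hGFint.mono_set hsub3) hT2int measurableSet_Ioo
      intro τ _
      rcases le_total a (Finv τ) with hc | hc
      · have := hFG τ hc
        have := le_max_right (a - Finv τ) 0
        linarith
      · have h1 : G τ ≤ a := by
          apply max_le le_rfl
          exact le_trans (min_le_left _ _) hc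
        have := le_max_left (a - Finv τ) 0
        linarith
    linarith
  have habs : |(∫ τ in Set.Ioo (0:ℝ) 1, Finv τ) - ∫ τ in Set.Ioo (0:ℝ) 1, G τ|
      ≤ (∫ τ in Set.Ioo (1-h) (1:ℝ), max (Finv τ - b) 0)
        + ∫ τ in Set.Ioo (0:ℝ) h, max (a - Finv τ) 0 :=
    abs_le.2 ⟨by linarith, by linarith⟩
  have htri := abs_sub_le (∫ τ in Set.Ioo (0:ℝ) 1, Finv τ)
    (∫ τ in Set.Ioo (0:ℝ) 1, G τ)
    ((1 / m) * ∑ i ∈ Finset.range m, Finv ((2 * (i : ℝ) + 1) / (2 * m)))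
  linarith
end
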